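/- Let W(D₅) ≤ Perm(Fin 5 × Bool) be the group 2⁴·S₅ of signed permutations of Fin 5 × Bool with sign product 1 (the Weyl group of the root system D₅), a group of order 2⁴·5!. Then the commutator subgroup of W(D₅) has index 2 in W(D₅) and is a perfect group (it equals its own commutator subgroup); consequently W(D₅) has exactly one subgroup of index 2. -/

import Mathlib

open Equiv Finset

namespace SignedPerm

variable {m : ℕ}

/-- The sign-flip involution ν on `Fin m × Bool`. -/
def nu (m : ℕ) : Equiv.Perm (Fin m × Bool) where
  toFun p := (p.1, !p.2)
  invFun p := (p.1, !p.2)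
  left_inv p := by simp
  right_inv p := by simp

/-- The signed permutation `(i,b) ↦ (s i, εᵢ · b)`, where `ε i = true` means sign flip. -/
def signedOf (s : Equiv.Perm (Fin m)) (ε : Fin m → Bool) : Equiv.Perm (Fin m × Bool) where
  toFun p := (s p.1, xor (ε p.1) p.2)
  invFun p := (s.symm p.1, xor (ε (s.symm p.1)) p.2)
  left_inv p := by simp [← Bool.xor_assoc]
  right_inv p := by simp [← Bool.xor_assoc]

/-- The sign product `∏ᵢ εᵢ` of a system of signs (`true` = `-1`). -/
def signProd (ε : Fin m → Bool) : ℤˣ := ∏ i, if ε i then -1 else 1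

lemma signedOf_one : signedOf (1 : Equiv.Perm (Fin m)) (fun _ => false) = 1 :=
  Equiv.ext fun p => by simp [signedOf]

lemma signedOf_mul (s t : Equiv.Perm (Fin m)) (ε η : Fin m → Bool) :
    signedOf s ε * signedOf t η = signedOf (s * t) (fun i => xor (ε (t i)) (η i)) :=
  Equiv.ext fun p => by simp [signedOf, Equiv.Perm.mul_apply, Bool.xor_assoc]

lemma signedOf_inv (s : Equiv.Perm (Fin m)) (ε : Fin m → Bool) :
    (signedOf s ε)⁻¹ = signedOf s⁻¹ (fun i => ε (s⁻¹ i)) :=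
  inv_eq_of_mul_eq_one_right <| by
    rw [signedOf_mul]
    simp [signedOf_one]

lemma signProd_const_false : signProd (fun _ : Fin m => false) = 1 := by simp [signProd]

lemma signProd_comp (t : Equiv.Perm (Fin m)) (ε : Fin m → Bool) :
    signProd (fun i => ε (t i)) = signProd ε := by
  simpa [signProd] using Equiv.prod_comp t (fun i => if ε i then (-1 : ℤˣ) else 1)

lemma signProd_xor (ε η : Fin m → Bool) :
    signProd (fun i => xor (ε i) (η i)) = signProd ε * signProd η := by
  rw [signProd, signProd, signProd, ← Finset.prod_mul_distrib]
  refine Finset.prod_congr rfl fun i _ => ?_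
  cases ε i <;> cases η i <;> simp

/-- The group `2^m · G` of all signed permutations with underlying permutation in `G`. -/
def bigSigned (G : Subgroup (Equiv.Perm (Fin m))) : Subgroup (Equiv.Perm (Fin m × Bool)) where
  carrier := {σ | ∃ s ∈ G, ∃ ε : Fin m → Bool, σ = signedOf s ε}
  one_mem' := ⟨1, G.one_mem, fun _ => false, signedOf_one.symm⟩
  mul_mem' := by
    rintro σ τ ⟨s, hs, ε, rfl⟩ ⟨t, ht, η, rfl⟩
    exact ⟨s * t, G.mul_mem hs ht, _, (signedOf_mul s t ε η)⟩
  inv_mem' := by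
    rintro σ ⟨s, hs, ε, rfl⟩
    exact ⟨s⁻¹, G.inv_mem hs, _, signedOf_inv s ε⟩

/-- The group `2^{m-1} · G` of signed permutations with underlying permutation in `G`
and sign product `1`. -/
def evenSigned (G : Subgroup (Equiv.Perm (Fin m))) : Subgroup (Equiv.Perm (Fin m × Bool)) where
  carrier := {σ | ∃ s ∈ G, ∃ ε : Fin m → Bool, σ = signedOf s ε ∧ signProd ε = 1}
  one_mem' := ⟨1, G.one_mem, fun _ => false, signedOf_one.symm, signProd_const_false⟩
  mul_mem' := by
    rintro σ τ ⟨s, hs, ε, rfl, hε⟩ ⟨t, ht, η, rfl, hη⟩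
    refine ⟨s * t, G.mul_mem hs ht, _, signedOf_mul s t ε η, ?_⟩
    rw [signProd_xor (fun i => ε (t i)) η, signProd_comp t ε, hε, hη, one_mul]
  inv_mem' := by
    rintro σ ⟨s, hs, ε, rfl, hε⟩
    exact ⟨s⁻¹, G.inv_mem hs, _, signedOf_inv s ε, by rw [signProd_comp s⁻¹ ε, hε]⟩

end SignedPerm
namespace SignedPermAux

open SignedPerm Equiv
open scoped commutatorElement

abbrev W5 : Subgroup (Equiv.Perm (Fin 5 × Bool)) := evenSigned (⊤ : Subgroup (Equiv.Perm (Fin 5)))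

lemma signedOf_inj {m : ℕ} {s t : Equiv.Perm (Fin m)} {ε η : Fin m → Bool}
    (h : signedOf s ε = signedOf t η) : s = t ∧ ε = η := by
  have key : ∀ i, s i = t i ∧ ε i = η i := by
    intro i
    have h' := congrArg (fun f : Equiv.Perm (Fin m × Bool) => f (i, false)) h
    simp only [signedOf, Equiv.coe_fn_mk, Bool.xor_false] at h'
    exact ⟨congrArg Prod.fst h', congrArg Prod.snd h'⟩
  exact ⟨Equiv.ext fun i => (key i).1, funext fun i => (key i).2⟩

lemma mem_W5_iff (σ : Equiv.Perm (Fin 5 × Bool)) :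
    σ ∈ W5 ↔ ∃ s, s ∈ (⊤ : Subgroup (Equiv.Perm (Fin 5))) ∧
      ∃ ε : Fin 5 → Bool, σ = signedOf s ε ∧ signProd ε = 1 := Iff.rfl

/-- Constructor for elements of `W5`. -/
def mk5 (s : Equiv.Perm (Fin 5)) (ε : Fin 5 → Bool) (h : signProd ε = 1) : W5 :=
  ⟨signedOf s ε, s, Subgroup.mem_top s, ε, rfl, h⟩

lemma coe_mk5 (s : Equiv.Perm (Fin 5)) (ε : Fin 5 → Bool) (h : signProd ε = 1) :
    ((mk5 s ε h : W5) : Equiv.Perm (Fin 5 × Bool)) = signedOf s ε := rfl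

noncomputable def sPart (σ : W5) : Equiv.Perm (Fin 5) :=
  ((mem_W5_iff σ.1).mp σ.2).choose

noncomputable def εPart (σ : W5) : Fin 5 → Bool :=
  ((mem_W5_iff σ.1).mp σ.2).choose_spec.2.choose

lemma part_spec (σ : W5) :
    (σ : Equiv.Perm (Fin 5 × Bool)) = signedOf (sPart σ) (εPart σ) ∧ signProd (εPart σ) = 1 :=
  ((mem_W5_iff σ.1).mp σ.2).choose_spec.2.choose_spec

lemma part_eq {σ : W5} {s : Equiv.Perm (Fin 5)} {ε : Fin 5 → Bool}
    (h : (σ : Equiv.Perm (Fin 5 × Bool)) = signedOf s ε) : sPart σ = s ∧ εPart σ = ε :=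
  signedOf_inj ((part_spec σ).1.symm.trans h)

/-- The sign-of-underlying-permutation homomorphism `W(D₅) → ℤˣ`. -/
noncomputable def φ : W5 →* ℤˣ where
  toFun σ := Equiv.Perm.sign (sPart σ)
  map_one' := by
    have h : ((1 : W5) : Equiv.Perm (Fin 5 × Bool)) = signedOf 1 (fun _ => false) :=
      signedOf_one.symm
    show Equiv.Perm.sign (sPart 1) = 1
    rw [(part_eq h).1, map_one]
  map_mul' σ τ := by
    have h : ((σ * τ : W5) : Equiv.Perm (Fin 5 × Bool))
        = signedOf (sPart σ * sPart τ) (fun i => xor (εPart σ (sPart τ i)) (εPart τ i)) := by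
      rw [Subgroup.coe_mul, (part_spec σ).1, (part_spec τ).1, signedOf_mul]
    show Equiv.Perm.sign (sPart (σ * τ)) = _
    rw [(part_eq h).1, map_mul]

lemma φ_mk5 (s : Equiv.Perm (Fin 5)) (ε : Fin 5 → Bool) (h : signProd ε = 1) :
    φ (mk5 s ε h) = Equiv.Perm.sign s := by
  show Equiv.Perm.sign (sPart (mk5 s ε h)) = _
  rw [(part_eq (coe_mk5 s ε h)).1]

/-- The kernel of `φ`: the subgroup `2⁴·A₅`. -/
noncomputable abbrev K5 : Subgroup W5 := φ.ker

lemma pair_signProd : ∀ a b : Fin 5,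
    signProd (fun i => xor (decide (i = a)) (decide (i = b))) = 1 := by decide

lemma exists_third : ∀ a b : Fin 5, a ≠ b → ∃ c, c ≠ a ∧ c ≠ b := by decide

lemma pair_decomp : ∀ ε : Fin 5 → Bool, signProd ε = 1 → ∃ a b c d : Fin 5, ∀ i,
    ε i = xor (xor (decide (i = a)) (decide (i = b))) (xor (decide (i = c)) (decide (i = d))) := by
  decide

lemma pair_formula : ∀ a b c : Fin 5, a ≠ b → c ≠ a → c ≠ b → ∀ i : Fin 5,
    xor (xor (decide (i = a)) (decide (i = c)))
      (xor (decide ((Equiv.swap a c * Equiv.swap c b)⁻¹ i = a))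
        (decide ((Equiv.swap a c * Equiv.swap c b)⁻¹ i = c)))
    = xor (decide (i = a)) (decide (i = b)) := by decide

/-- The basic commutator computation `⁅(1,ε),(t,0)⁆ = (1, ε ⊕ ε∘t⁻¹)`. -/
lemma comm_compute (ε : Fin 5 → Bool) (t : Equiv.Perm (Fin 5)) :
    ⁅signedOf (1 : Equiv.Perm (Fin 5)) ε, signedOf t (fun _ => false)⁆
      = signedOf 1 (fun i => xor (ε i) (ε (t⁻¹ i))) := by
  rw [commutatorElement_def, signedOf_inv, signedOf_inv, signedOf_mul, signedOf_mul, signedOf_mul]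
  refine Equiv.ext fun p => ?_
  simp [signedOf, Bool.xor_comm]

lemma mk5_mul (s t : Equiv.Perm (Fin 5)) (ε η : Fin 5 → Bool) (h₁ h₂ h₃) :
    mk5 s ε h₁ * mk5 t η h₂ = mk5 (s * t) (fun i => xor (ε (t i)) (η i)) h₃ :=
  Subtype.ext (signedOf_mul s t ε η)

lemma mk5_one (h) : mk5 1 (fun _ => false) h = 1 := Subtype.ext signedOf_one

/-- Each `(1, pair a b)` lies in `⁅K₅, K₅⁆`. -/
lemma pair_mem_comm (a b : Fin 5)
    (h : signProd (fun i => xor (decide (i = a)) (decide (i = b))) = 1) :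
    mk5 1 (fun i => xor (decide (i = a)) (decide (i = b))) h ∈ ⁅K5, K5⁆ := by
  rcases eq_or_ne a b with rfl | hab
  · have : mk5 1 (fun i => xor (decide (i = a)) (decide (i = a))) h = 1 := by
      refine Subtype.ext ?_
      rw [coe_mk5]
      have : (fun i : Fin 5 => xor (decide (i = a)) (decide (i = a))) = fun _ => false := by
        funext i; simp
      rw [this, signedOf_one, Subgroup.coe_one]
    rw [this]; exact Subgroup.one_mem _
  · obtain ⟨c, hca, hcb⟩ := exists_third a b hab
    set t : Equiv.Perm (Fin 5) := Equiv.swap a c * Equiv.swap c b with ht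
    have hx : mk5 1 (fun i => xor (decide (i = a)) (decide (i = c))) (pair_signProd a c) ∈ K5 := by
      rw [MonoidHom.mem_ker, φ_mk5, map_one]
    have hy : mk5 t (fun _ => false) signProd_const_false ∈ K5 := by
      rw [MonoidHom.mem_ker, φ_mk5, map_mul, Equiv.Perm.sign_swap (Ne.symm hca),
        Equiv.Perm.sign_swap hcb]
      norm_num
    have hmem := Subgroup.commutator_mem_commutator hx hy
    have key : ⁅mk5 1 (fun i => xor (decide (i = a)) (decide (i = c))) (pair_signProd a c),
        mk5 t (fun _ => false) signProd_const_false⁆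
        = mk5 1 (fun i => xor (decide (i = a)) (decide (i = b))) h := by
      refine Subtype.ext ?_
      have hcoe : ((⁅mk5 1 (fun i => xor (decide (i = a)) (decide (i = c))) (pair_signProd a c),
          mk5 t (fun _ => false) signProd_const_false⁆ : W5) : Equiv.Perm (Fin 5 × Bool))
          = ⁅signedOf 1 (fun i => xor (decide (i = a)) (decide (i = c))),
              signedOf t (fun _ => false)⁆ := by
        simp [commutatorElement_def, coe_mk5]
      rw [hcoe, comm_compute, coe_mk5]
      congr 1
      funext i
      exact pair_formula a b c hab hca hcb i
    rwa [key] at hmem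

/-- Each `(1, ε)` with even `ε` lies in `⁅K₅, K₅⁆`. -/
lemma diag_mem_comm (ε : Fin 5 → Bool) (h : signProd ε = 1) :
    mk5 1 ε h ∈ ⁅K5, K5⁆ := by
  obtain ⟨a, b, c, d, hdec⟩ := pair_decomp ε h
  have hsum : mk5 1 (fun i => xor (decide (i = a)) (decide (i = b))) (pair_signProd a b)
      * mk5 1 (fun i => xor (decide (i = c)) (decide (i = d))) (pair_signProd c d)
      = mk5 1 ε h := by
    refine Subtype.ext ?_
    have he : ε = fun i => xor ((fun j => xor (decide (j = a)) (decide (j = b)))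
        ((1 : Equiv.Perm (Fin 5)) i)) ((fun j => xor (decide (j = c)) (decide (j = d))) i) :=
      funext fun i => by rw [hdec i]; rfl
    rw [Subgroup.coe_mul, coe_mk5, coe_mk5, coe_mk5, signedOf_mul, one_mul, ← he]
  rw [← hsum]
  exact Subgroup.mul_mem _ (pair_mem_comm a b _) (pair_mem_comm c d _)

/-- The embedding `S₅ → W(D₅)`, `s ↦ (s, 0)`. -/
def jHom : Equiv.Perm (Fin 5) →* W5 where
  toFun s := mk5 s (fun _ => false) signProd_const_false
  map_one' := mk5_one _
  map_mul' s t := by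
    refine Subtype.ext ?_
    rw [Subgroup.coe_mul, coe_mk5, coe_mk5, coe_mk5, signedOf_mul]
    congr 1

lemma perm_mem_comm (s : Equiv.Perm (Fin 5)) (hs : Equiv.Perm.sign s = 1) :
    mk5 s (fun _ => false) signProd_const_false ∈ ⁅K5, K5⁆ := by
  classical
  set k : alternatingGroup (Fin 5) →* W5 := jHom.comp (alternatingGroup (Fin 5)).subtype with hk
  have hrange : k.range ≤ K5 := by
    rintro _ ⟨x, rfl⟩
    rw [MonoidHom.mem_ker]
    show φ (mk5 (x : Equiv.Perm (Fin 5)) (fun _ => false) signProd_const_false) = 1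
    rw [φ_mk5]
    exact x.2
  have hA : ⁅(⊤ : Subgroup (alternatingGroup (Fin 5))), (⊤ : Subgroup (alternatingGroup (Fin 5)))⁆
      = (⊤ : Subgroup (alternatingGroup (Fin 5))) := by
    rcases (Subgroup.commutator_normal (⊤ : Subgroup (alternatingGroup (Fin 5)))
        (⊤ : Subgroup (alternatingGroup (Fin 5)))).eq_bot_or_eq_top with hbot | htop
    · exfalso
      set x : alternatingGroup (Fin 5) :=
        ⟨Equiv.swap 0 1 * Equiv.swap 1 2, Equiv.Perm.mem_alternatingGroup.mpr (by decide)⟩ with hxdef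
      set y : alternatingGroup (Fin 5) :=
        ⟨Equiv.swap 1 2 * Equiv.swap 2 3, Equiv.Perm.mem_alternatingGroup.mpr (by decide)⟩ with hydef
      have hc : ⁅x, y⁆ ∈ ⁅(⊤ : Subgroup (alternatingGroup (Fin 5))), ⊤⁆ :=
        Subgroup.commutator_mem_commutator (Subgroup.mem_top x) (Subgroup.mem_top y)
      rw [hbot, Subgroup.mem_bot, commutatorElement_eq_one_iff_mul_comm] at hc
      have : (x : Equiv.Perm (Fin 5)) * y = y * x := congrArg Subtype.val hc
      revert this
      decide
    · exact htop
  have hsmem : s ∈ alternatingGroup (Fin 5) := Equiv.Perm.mem_alternatingGroup.mpr hs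
  have : mk5 s (fun _ => false) signProd_const_false = k ⟨s, hsmem⟩ := rfl
  rw [this]
  have hmap : k ⟨s, hsmem⟩ ∈ Subgroup.map k ⊤ :=
    Subgroup.mem_map_of_mem k (Subgroup.mem_top _)
  rw [← hA, Subgroup.map_commutator] at hmap
  exact Subgroup.commutator_mono (by rw [← MonoidHom.range_eq_map]; exact hrange)
    (by rw [← MonoidHom.range_eq_map]; exact hrange) hmap

lemma K5_perfect : ⁅K5, K5⁆ = K5 := by
  refine le_antisymm (Subgroup.commutator_le.mpr fun g hg h hh => ?_) fun σ hσ => ?_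
  · rw [commutatorElement_def]
    exact K5.mul_mem (K5.mul_mem (K5.mul_mem hg hh) (K5.inv_mem hg)) (K5.inv_mem hh)
  · obtain ⟨hσeq, hσsign⟩ := part_spec σ
    have hker : Equiv.Perm.sign (sPart σ) = 1 := hσ
    have hfactor : σ = mk5 (sPart σ) (fun _ => false) signProd_const_false
        * mk5 1 (εPart σ) hσsign := by
      refine Subtype.ext ?_
      have he : εPart σ = fun i => xor ((fun _ : Fin 5 => false) ((1 : Equiv.Perm (Fin 5)) i))
          ((εPart σ) i) := funext fun i => by simp
      rw [Subgroup.coe_mul, coe_mk5, coe_mk5, signedOf_mul, mul_one, hσeq, ← he]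
    rw [hfactor]
    exact Subgroup.mul_mem _ (perm_mem_comm _ hker) (diag_mem_comm _ hσsign)

lemma φ_surjective : Function.Surjective φ := by
  intro u
  rcases Int.units_eq_one_or u with rfl | rfl
  · exact ⟨1, map_one φ⟩
  · refine ⟨mk5 (Equiv.swap 0 1) (fun _ => false) signProd_const_false, ?_⟩
    rw [φ_mk5, Equiv.Perm.sign_swap (by decide)]

lemma commutator_eq_K5 : commutator W5 = K5 := by
  refine le_antisymm (Abelianization.commutator_subset_ker φ) ?_
  calc K5 = ⁅K5, K5⁆ := K5_perfect.symm
    _ ≤ ⁅(⊤ : Subgroup W5), ⊤⁆ := Subgroup.commutator_mono le_top le_top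
    _ = commutator W5 := (commutator_def W5).symm

lemma K5_index : K5.index = 2 := by
  rw [Subgroup.index_ker, MonoidHom.range_eq_top.mpr φ_surjective, Subgroup.card_top,
    Nat.card_eq_fintype_card, Fintype.card_units_int]

/-- The parameter space of `W(D₅)`. -/
noncomputable def paramEquiv : {p : Equiv.Perm (Fin 5) × (Fin 5 → Bool) // signProd p.2 = 1} ≃ W5 where
  toFun p := mk5 p.1.1 p.1.2 p.2
  invFun σ := ⟨(sPart σ, εPart σ), (part_spec σ).2⟩
  left_inv p := by
    obtain ⟨⟨s, ε⟩, hp⟩ := p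
    have h := part_eq (coe_mk5 s ε hp)
    simp [h.1, h.2]
  right_inv σ := Subtype.ext (part_spec σ).1.symm

def paramProd : {p : Equiv.Perm (Fin 5) × (Fin 5 → Bool) // signProd p.2 = 1}
    ≃ Equiv.Perm (Fin 5) × {ε : Fin 5 → Bool // signProd ε = 1} where
  toFun p := (p.1.1, ⟨p.1.2, p.2⟩)
  invFun q := ⟨(q.1, q.2.1), q.2.2⟩
  left_inv p := rfl
  right_inv q := rfl

lemma card_even : Fintype.card {ε : Fin 5 → Bool // signProd ε = 1} = 16 := by decide

lemma W5_card : Nat.card W5 = 2 ^ 4 * Nat.factorial 5 := by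
  rw [← Nat.card_congr paramEquiv, Nat.card_congr paramProd, Nat.card_eq_fintype_card,
    Fintype.card_prod, card_even, Fintype.card_perm, Fintype.card_fin]
  norm_num [Nat.factorial]

end SignedPermAux

open SignedPerm in
/-- the Weyl group `W(D₅) = 2⁴·S₅` of signed permutations of `Fin 5 × Bool`
with sign product 1 has order `2⁴·5!`; its commutator subgroup has index 2 and is perfect;
consequently `W(D₅)` has exactly one subgroup of index 2. -/
theorem statement10 :
    Nat.card (evenSigned (⊤ : Subgroup (Equiv.Perm (Fin 5)))) = 2 ^ 4 * Nat.factorial 5 ∧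
    (commutator (evenSigned (⊤ : Subgroup (Equiv.Perm (Fin 5))))).index = 2 ∧
    ⁅commutator (evenSigned (⊤ : Subgroup (Equiv.Perm (Fin 5)))),
        commutator (evenSigned (⊤ : Subgroup (Equiv.Perm (Fin 5))))⁆
      = commutator (evenSigned (⊤ : Subgroup (Equiv.Perm (Fin 5)))) ∧
    ∃! H : Subgroup (evenSigned (⊤ : Subgroup (Equiv.Perm (Fin 5)))), H.index = 2 := by
  classical
  open SignedPermAux in
  refine ⟨W5_card, ?_, ?_, ?_⟩
  · rw [commutator_eq_K5]; exact K5_index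
  · rw [commutator_eq_K5]; exact K5_perfect
  · refine ⟨commutator W5, by rw [commutator_eq_K5]; exact K5_index, fun H hH => ?_⟩
    have hCH : commutator W5 ≤ H := by
      rw [commutator_def]
      refine Subgroup.commutator_le.mpr fun g _ h _ => ?_
      rw [commutatorElement_def, Subgroup.mul_mem_iff_of_index_two hH,
        Subgroup.mul_mem_iff_of_index_two hH, Subgroup.mul_mem_iff_of_index_two hH,
        H.inv_mem_iff, H.inv_mem_iff]
      tauto
    have hidx : (commutator W5).index = 2 := by rw [commutator_eq_K5]; exact K5_index
    have hrel := Subgroup.relIndex_mul_index hCH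
    rw [hH, hidx] at hrel
    have h1 : (commutator W5).relIndex H = 1 := by omega
    exact le_antisymm (Subgroup.relIndex_eq_one.mp h1) hCH
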